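/- Let H be a real Hilbert space (complete inner product space over ℝ) and let B ⊆ H be a nonempty bounded subset. Then there exists a unique point c ∈ H realizing the radius of B: setting r_B(v) := sup_{w ∈ B} dist(v,w) and r_B := inf_{v ∈ H} r_B(v), there is exactly one c ∈ H with r_B(c) = r_B. This point is the Chebyshev (geometric) center of B, characterized as the unique point c with B ⊆ closedBall(c, r_B). -/

import Mathlib

set_option linter.unusedSectionVars false
open Metric

section ChebyAux
variable {H : Type*} [NormedAddCommGroup H] [InnerProductSpace ℝ H]

noncomputable def chebyRad (B : Set H) (v : H) : ℝ := ⨆ w ∈ B, dist v w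
noncomputable def chebyR (B : Set H) : ℝ := ⨅ v : H, chebyRad B v

lemma chebyRad_le {B : Set H} (hB : B.Nonempty) {v : H} {a : ℝ}
    (h : ∀ w ∈ B, dist v w ≤ a) : chebyRad B v ≤ a := by
  obtain ⟨w₀, hw₀⟩ := hB
  have ha : 0 ≤ a := dist_nonneg.trans (h w₀ hw₀)
  exact Real.iSup_le (fun w => Real.iSup_le (fun hw => h w hw) ha) ha

lemma le_chebyRad {B : Set H} (hBbdd : Bornology.IsBounded B) {v w : H} (hw : w ∈ B) :
    dist v w ≤ chebyRad B v := by
  obtain ⟨C, hC⟩ := hBbdd.subset_closedBall v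
  have hbdd : BddAbove (Set.range fun w => ⨆ _ : w ∈ B, dist v w) := by
    refine ⟨max C 0, ?_⟩
    rintro x ⟨w', rfl⟩
    refine Real.iSup_le (fun hw' => ?_) (le_max_right _ _)
    exact le_max_of_le_left (by simpa [dist_comm] using hC hw')
  refine le_trans ?_ (le_ciSup hbdd w)
  rw [ciSup_pos hw]

lemma chebyRad_nonneg {B : Set H} (hB : B.Nonempty) (hBbdd : Bornology.IsBounded B) (v : H) :
    0 ≤ chebyRad B v :=
  dist_nonneg.trans (le_chebyRad hBbdd hB.choose_spec)

lemma chebyR_le {B : Set H} (hB : B.Nonempty) (hBbdd : Bornology.IsBounded B) (v : H) :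
    chebyR B ≤ chebyRad B v :=
  ciInf_le ⟨0, by rintro x ⟨u, rfl⟩; exact chebyRad_nonneg hB hBbdd u⟩ v

lemma chebyR_nonneg {B : Set H} (hB : B.Nonempty) (hBbdd : Bornology.IsBounded B) :
    0 ≤ chebyR B :=
  le_ciInf (chebyRad_nonneg hB hBbdd)

lemma exists_far {B : Set H} (hB : B.Nonempty) (hBbdd : Bornology.IsBounded B)
    (m : H) {t : ℝ} (ht : t < chebyR B) : ∃ w ∈ B, t < dist m w := by
  by_contra hcon
  push_neg at hcon
  exact absurd (ht.trans_le ((chebyR_le hB hBbdd m).trans (chebyRad_le hB hcon))) (lt_irrefl _)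

lemma cheby_key {B : Set H} (hB : B.Nonempty) (hBbdd : Bornology.IsBounded B) (u v : H) :
    ‖u - v‖ ^ 2 ≤ 2 * chebyRad B u ^ 2 + 2 * chebyRad B v ^ 2 - 4 * chebyR B ^ 2 := by
  obtain ⟨w₀, hw₀⟩ := hB
  have hB' : B.Nonempty := ⟨w₀, hw₀⟩
  have hru : 0 ≤ chebyRad B u := chebyRad_nonneg hB' hBbdd u
  have hrv : 0 ≤ chebyRad B v := chebyRad_nonneg hB' hBbdd v
  set m : H := (2⁻¹ : ℝ) • (u + v) with hm
  have hpar : ∀ w ∈ B, ‖u - v‖ ^ 2 =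
      2 * dist u w ^ 2 + 2 * dist v w ^ 2 - 4 * dist m w ^ 2 := by
    intro w hw
    have hpl := parallelogram_law_with_norm ℝ (u - w) (v - w)
    have hsum : (u - w) + (v - w) = (2 : ℝ) • (m - w) := by rw [hm]; module
    have hdiff : (u - w) - (v - w) = u - v := by abel
    have hnorm : ‖(2 : ℝ) • (m - w)‖ = 2 * ‖m - w‖ := by
      rw [norm_smul]; simp
    rw [hsum, hdiff, hnorm] at hpl
    simp only [dist_eq_norm]
    nlinarith [hpl]
  rcases eq_or_lt_of_le (chebyR_nonneg hB' hBbdd) with hR0 | hRpos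
  · have htri : ‖u - v‖ ≤ chebyRad B u + chebyRad B v := by
      calc ‖u - v‖ = dist u v := (dist_eq_norm u v).symm
        _ ≤ dist u w₀ + dist v w₀ := dist_triangle_right _ _ _
        _ ≤ chebyRad B u + chebyRad B v :=
            add_le_add (le_chebyRad hBbdd hw₀) (le_chebyRad hBbdd hw₀)
    nlinarith [sq_nonneg (chebyRad B u - chebyRad B v), norm_nonneg (u - v)]
  · refine ge_of_tendsto (f := fun t : ℝ =>
      2 * chebyRad B u ^ 2 + 2 * chebyRad B v ^ 2 - 4 * t ^ 2)
      (x := nhdsWithin (chebyR B) (Set.Iio (chebyR B))) ?_ ?_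
    · exact ((continuous_const.sub ((continuous_const.mul
        ((continuous_id.pow 2) : Continuous fun t : ℝ => t ^ 2)))).tendsto _).mono_left
        nhdsWithin_le_nhds
    · filter_upwards [Ioo_mem_nhdsLT hRpos] with t ht
      obtain ⟨w, hw, hdw⟩ := exists_far hB' hBbdd m ht.2
      have h1 : dist u w ≤ chebyRad B u := le_chebyRad hBbdd hw
      have h2 : dist v w ≤ chebyRad B v := le_chebyRad hBbdd hw
      have h3 : t ≤ dist m w := hdw.le
      have := hpar w hw
      nlinarith [dist_nonneg (x := u) (y := w), dist_nonneg (x := v) (y := w), ht.1.le]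

lemma cheby_exists {B : Set H} [CompleteSpace H] (hB : B.Nonempty)
    (hBbdd : Bornology.IsBounded B) : ∃ c : H, chebyRad B c = chebyR B := by
  have hmin : ∀ n : ℕ, ∃ v : H, chebyRad B v < chebyR B + 1 / (n + 1) := fun n =>
    exists_lt_of_ciInf_lt (lt_add_of_pos_right _ (by positivity))
  choose v hv using hmin
  have hR0 : 0 ≤ chebyR B := chebyR_nonneg hB hBbdd
  have hvle : ∀ n : ℕ, chebyRad B (v n) ≤ chebyR B + 1 / (n + 1) := fun n => (hv n).le
  have hvge : ∀ n : ℕ, chebyR B ≤ chebyRad B (v n) := fun n => chebyR_le hB hBbdd (v n)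
  have hcauchy : CauchySeq v := by
    apply cauchySeq_of_le_tendsto_0
      (b := fun N : ℕ => Real.sqrt (8 * chebyR B * (1 / (N + 1)) + 4 * (1 / (N + 1)) ^ 2))
    · intro n m N hn hm
      have hkey := cheby_key hB hBbdd (v n) (v m)
      have han : (1 : ℝ) / (n + 1) ≤ 1 / (N + 1) := by
        apply one_div_le_one_div_of_le (by positivity)
        exact_mod_cast add_le_add_left (Nat.cast_le.2 hn) 1
      have ham : (1 : ℝ) / (m + 1) ≤ 1 / (N + 1) := by
        apply one_div_le_one_div_of_le (by positivity)
        exact_mod_cast add_le_add_left (Nat.cast_le.2 hm) 1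
      have hsq : dist (v n) (v m) ^ 2 ≤
          8 * chebyR B * (1 / (N + 1)) + 4 * (1 / (N + 1)) ^ 2 := by
        rw [dist_eq_norm]
        have h1 := hvle n; have h2 := hvle m
        have h3 := hvge n; have h4 := hvge m
        have hp : (0:ℝ) < 1 / (N + 1) := by positivity
        nlinarith [hkey, sq_nonneg (1 / ((n:ℝ) + 1)), sq_nonneg (1 / ((m:ℝ) + 1))]
      calc dist (v n) (v m) = Real.sqrt (dist (v n) (v m) ^ 2) :=
            (Real.sqrt_sq dist_nonneg).symm
        _ ≤ _ := Real.sqrt_le_sqrt hsq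
    · have h1 : Filter.Tendsto (fun N : ℕ => 1 / ((N : ℝ) + 1)) Filter.atTop (nhds 0) :=
        tendsto_one_div_add_atTop_nhds_zero_nat
      have h2 : Filter.Tendsto
          (fun N : ℕ => 8 * chebyR B * (1 / (N + 1)) + 4 * (1 / (N + 1)) ^ 2)
          Filter.atTop (nhds (8 * chebyR B * 0 + 4 * 0 ^ 2)) :=
        ((h1.const_mul _).add ((h1.pow 2).const_mul _))
      simp only [mul_zero, zero_pow, add_zero, ne_eq, OfNat.ofNat_ne_zero,
        not_false_eq_true] at h2
      have := (Real.continuous_sqrt.tendsto 0).comp h2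
      simpa [Real.sqrt_zero, Function.comp_def] using this
  obtain ⟨c, hc⟩ := cauchySeq_tendsto_of_complete hcauchy
  refine ⟨c, le_antisymm ?_ (chebyR_le hB hBbdd c)⟩
  have hlip : ∀ n, chebyRad B c ≤ dist c (v n) + chebyRad B (v n) := by
    intro n
    refine chebyRad_le hB fun w hw => ?_
    exact (dist_triangle c (v n) w).trans (add_le_add_right (le_chebyRad hBbdd hw) _)
  have hdist : Filter.Tendsto (fun n => dist c (v n)) Filter.atTop (nhds 0) := by
    have := Filter.Tendsto.dist (tendsto_const_nhds (x := c)) hc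
    simpa using this
  have h1 : Filter.Tendsto (fun N : ℕ => 1 / ((N : ℝ) + 1)) Filter.atTop (nhds 0) :=
    tendsto_one_div_add_atTop_nhds_zero_nat
  have hten : Filter.Tendsto (fun n => dist c (v n) + (chebyR B + 1 / (n + 1)))
      Filter.atTop (nhds (0 + (chebyR B + 0))) :=
    hdist.add (tendsto_const_nhds.add h1)
  rw [zero_add, add_zero] at hten
  exact ge_of_tendsto hten (Filter.Eventually.of_forall fun n =>
    (hlip n).trans (add_le_add_right (hvle n) _))

end ChebyAux

/-- Existence and uniqueness of the Chebyshev (geometric) center of a nonempty bounded subset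
of a real Hilbert space, together with its characterization as the unique point `c` such that
`B ⊆ closedBall c r_B`. -/
theorem chebyshev_center_exists_unique
    {H : Type*} [NormedAddCommGroup H] [InnerProductSpace ℝ H] [CompleteSpace H]
    (B : Set H) (hB : B.Nonempty) (hBbdd : Bornology.IsBounded B) :
    (∃! c : H, (⨆ w ∈ B, dist c w) = ⨅ v : H, ⨆ w ∈ B, dist v w) ∧
    (∀ c : H, (⨆ w ∈ B, dist c w) = (⨅ v : H, ⨆ w ∈ B, dist v w) ↔
      B ⊆ Metric.closedBall c (⨅ v : H, ⨆ w ∈ B, dist v w)) := by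
  show (∃! c : H, chebyRad B c = chebyR B) ∧
    (∀ c : H, chebyRad B c = chebyR B ↔ B ⊆ Metric.closedBall c (chebyR B))
  constructor
  · obtain ⟨c, hc⟩ := cheby_exists hB hBbdd
    refine ⟨c, hc, fun c' hc' => ?_⟩
    have hkey := cheby_key hB hBbdd c' c
    rw [hc, hc'] at hkey
    have : ‖c' - c‖ ^ 2 ≤ 0 := by nlinarith
    have : ‖c' - c‖ = 0 := by nlinarith [norm_nonneg (c' - c), sq_nonneg ‖c' - c‖]
    exact sub_eq_zero.mp (norm_eq_zero.mp this)
  · intro c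
    constructor
    · intro hc w hw
      rw [Metric.mem_closedBall, dist_comm, ← hc]
      exact le_chebyRad hBbdd hw
    · intro hsub
      refine le_antisymm (chebyRad_le hB fun w hw => ?_) (chebyR_le hB hBbdd c)
      rw [dist_comm]
      exact hsub hw
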